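/- Let k ≥ 2 and let T be any clause tree for x₁,…,x_k. The translation of the clause x₁ ∨ ⋯ ∨ x_k into Tᵗ(T) with the root's auxiliary variable replaced by the constant true is a strict (k−1, 3(k−1)/2)-gadget from kSAT to Max2XOR with k−2 auxiliary variables: its total weight is 3(k−1)/2; for every assignment I of x₁,…,x_k satisfying the clause, every extension of I to the non-root internal variables has value at most k−1 and some extension attains k−1; and for every I falsifying the clause, every extension has value at most k−2 and some extension attains k−2. -/

import Mathlib

/-- A (candidate) clause tree: a full binary tree whose leaves are labeled by (indices of)
the clause variables x_i and whose internal nodes carry (indices of) auxiliary variables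
b_v.  Leaf labels are interpreted by an assignment `x : ℕ → Bool` and internal labels by
an assignment `b : ℕ → Bool`. -/
inductive ClauseTree : Type
  | leaf (i : ℕ)
  | node (v : ℕ) (l r : ClauseTree)

namespace ClauseTree

/-- Labels of the leaves, left to right. -/
def leaves : ClauseTree → List ℕ
  | leaf i => [i]
  | node _ l r => leaves l ++ leaves r

/-- Labels of the internal nodes. -/
def internals : ClauseTree → List ℕ
  | leaf _ => []
  | node v l r => v :: (internals l ++ internals r)

/-- `t` is a clause tree for x₁,…,x_k: its leaves are labeled bijectively by 1,…,k and
its internal auxiliary variables are pairwise distinct (they are fresh by construction,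
living in a namespace separate from the leaf labels). -/
def IsClauseTree (k : ℕ) (t : ClauseTree) : Prop :=
  t.leaves.Nodup ∧ (∀ i, i ∈ t.leaves ↔ i ∈ Finset.Icc 1 k) ∧ t.internals.Nodup

/-- var(v) of the root of `t`: the value of the leaf variable if `t` is a leaf, and the
value of the auxiliary variable b_v if the root is an internal node v. -/
def rootVar (x b : ℕ → Bool) : ClauseTree → Bool
  | leaf i => x i
  | node v _ _ => b v

/-- Number of satisfied constraints among the triangle {p ⊕ q = 1, p ⊕ r = 0, q ⊕ r = 0}. -/
def triCount (p q r : Bool) : ℕ :=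
  (if xor p q = true then 1 else 0) +
  (if xor p r = false then 1 else 0) +
  (if xor q r = false then 1 else 0)

/-- Number of constraints of Tᵗ(t) satisfied by the assignment given by `x` and `b`:
for every internal node v with children u, w, the triangle
{var(u) ⊕ var(w) = 1, var(u) ⊕ b_v = 0, var(w) ⊕ b_v = 0} (each of weight 1/2). -/
def countSat (x b : ℕ → Bool) : ClauseTree → ℕ
  | leaf _ => 0
  | node v l r =>
      countSat x b l + countSat x b r + triCount (rootVar x b l) (rootVar x b r) (b v)

/-- Total number of constraints of Tᵗ(t). -/
def numConstraints : ClauseTree → ℕ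
  | leaf _ => 0
  | node _ l r => numConstraints l + numConstraints r + 3

/-- The OR of the values of the leaves below (the root of) `t`. -/
def orLeaves (x : ℕ → Bool) : ClauseTree → Bool
  | leaf i => x i
  | node _ l r => orLeaves x l || orLeaves x r

/-- The assignment `b` of the internal auxiliary variables agrees with the canonical
extension of `x`: every internal node v gets the OR of the values of the leaves below v. -/
def Agrees (x b : ℕ → Bool) : ClauseTree → Prop
  | leaf _ => True
  | node v l r => b v = orLeaves x (node v l r) ∧ Agrees x b l ∧ Agrees x b r

end ClauseTree

/-- Value (total satisfied weight, each constraint having weight 1/2) of Tᵗ(t). -/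
def ClauseTree.val (x b : ℕ → Bool) (t : ClauseTree) : ℚ :=
  (ClauseTree.countSat x b t : ℚ) / 2
namespace ClauseTree

lemma triCount_le_two (p q r : Bool) : triCount p q r ≤ 2 := by
  cases p <;> cases q <;> cases r <;> decide

lemma triCount_or (p q : Bool) : triCount p q (p || q) = 2 := by
  cases p <;> cases q <;> decide

lemma triCount_ff : triCount false false true = 0 := by decide

lemma leaves_length (t : ClauseTree) :
    t.leaves.length = t.internals.length + 1 := by
  induction t with
  | leaf i => simp [leaves, internals]
  | node v l r ihl ihr => simp [leaves, internals, ihl, ihr]; omega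

lemma numConstraints_eq (t : ClauseTree) :
    t.numConstraints = 3 * t.internals.length := by
  induction t with
  | leaf i => simp [numConstraints, internals]
  | node v l r ihl ihr => simp [numConstraints, internals, ihl, ihr]; ring

lemma rootVar_congr (x b b' : ℕ → Bool) (t : ClauseTree)
    (h : ∀ n ∈ t.internals, b n = b' n) : rootVar x b t = rootVar x b' t := by
  cases t with
  | leaf i => rfl
  | node v l r => exact h v (by simp [internals])

lemma countSat_congr (x b b' : ℕ → Bool) (t : ClauseTree)
    (h : ∀ n ∈ t.internals, b n = b' n) : countSat x b t = countSat x b' t := by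
  induction t with
  | leaf i => rfl
  | node v l r ihl ihr =>
    have hl : ∀ n ∈ l.internals, b n = b' n := fun n hn => h n (by simp [internals, hn])
    have hr : ∀ n ∈ r.internals, b n = b' n := fun n hn => h n (by simp [internals, hn])
    simp only [countSat, ihl hl, ihr hr, rootVar_congr x b b' l hl,
      rootVar_congr x b b' r hr, h v (by simp [internals])]

lemma orLeaves_false (x : ℕ → Bool) (t : ClauseTree)
    (h : ∀ i ∈ t.leaves, x i = false) : orLeaves x t = false := by
  induction t with
  | leaf i => exact h i (by simp [leaves])
  | node v l r ihl ihr =>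
    simp only [orLeaves, Bool.or_eq_false_iff]
    exact ⟨ihl fun i hi => h i (by simp [leaves, hi]),
           ihr fun i hi => h i (by simp [leaves, hi])⟩

lemma orLeaves_true (x : ℕ → Bool) (t : ClauseTree) (i : ℕ)
    (hi : i ∈ t.leaves) (hx : x i = true) : orLeaves x t = true := by
  induction t with
  | leaf j => simp [leaves] at hi; simpa [orLeaves, hi] using hx
  | node v l r ihl ihr =>
    simp only [leaves, List.mem_append] at hi
    simp only [orLeaves, Bool.or_eq_true]
    rcases hi with h | h
    · exact Or.inl (ihl h)
    · exact Or.inr (ihr h)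

lemma countSat_le (x b : ℕ → Bool) (t : ClauseTree) :
    countSat x b t ≤ 2 * t.internals.length := by
  induction t with
  | leaf i => simp [countSat, internals]
  | node v l r ihl ihr =>
    have := triCount_le_two (rootVar x b l) (rootVar x b r) (b v)
    simp only [countSat, internals, List.length_cons, List.length_append]
    omega

lemma countSat_lie (x b : ℕ → Bool) (t : ClauseTree)
    (h1 : rootVar x b t = true) (h2 : orLeaves x t = false) :
    countSat x b t + 2 ≤ 2 * t.internals.length := by
  induction t with
  | leaf i => simp [rootVar] at h1; simp [orLeaves] at h2; simp [h1] at h2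
  | node v l r ihl ihr =>
    simp only [orLeaves, Bool.or_eq_false_iff] at h2
    have hcl := countSat_le x b l
    have hcr := countSat_le x b r
    simp only [countSat, internals, List.length_cons, List.length_append]
    cases hpl : rootVar x b l with
    | true =>
      have := ihl hpl h2.1
      have htri := triCount_le_two true (rootVar x b r) (b v)
      omega
    | false =>
      cases hpr : rootVar x b r with
      | true =>
        have := ihr hpr h2.2
        have htri := triCount_le_two false true (b v)
        omega
      | false =>
        have hbv : b v = true := h1
        rw [hbv, triCount_ff]
        omega

/-- Canonical extension: internals get the OR of leaves below, everything else `true`. -/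
lemma exists_canonical (x : ℕ → Bool) (t : ClauseTree) (hnd : t.internals.Nodup) :
    ∃ b : ℕ → Bool, (∀ n, n ∉ t.internals → b n = true) ∧
      rootVar x b t = orLeaves x t ∧
      countSat x b t = 2 * t.internals.length := by
  induction t with
  | leaf i => exact ⟨fun _ => true, fun _ _ => rfl, rfl, by simp [countSat, internals]⟩
  | node v l r ihl ihr =>
    simp only [internals, List.nodup_cons, List.nodup_append] at hnd
    obtain ⟨hv, hl, hr, hdisj⟩ := hnd
    obtain ⟨bl, hbl_out, hbl_rv, hbl_cnt⟩ := ihl hl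
    obtain ⟨br, hbr_out, hbr_rv, hbr_cnt⟩ := ihr hr
    refine ⟨fun n => if n = v then orLeaves x l || orLeaves x r
            else if n ∈ l.internals then bl n else br n, ?_, ?_, ?_⟩
    · intro n hn
      simp only [internals, List.mem_cons, List.mem_append, not_or] at hn
      simp only [if_neg hn.1, if_neg hn.2.1]
      exact hbr_out n hn.2.2
    · simp [rootVar, orLeaves]
    · have hlcong : ∀ n ∈ l.internals,
          (fun n => if n = v then orLeaves x l || orLeaves x r
            else if n ∈ l.internals then bl n else br n) n = bl n := by
        intro n hn
        have hnv : n ≠ v := by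
          intro h; subst h; exact hv (by simp [internals, hn])
        simp [hnv, hn]
      have hrcong : ∀ n ∈ r.internals,
          (fun n => if n = v then orLeaves x l || orLeaves x r
            else if n ∈ l.internals then bl n else br n) n = br n := by
        intro n hn
        have hnv : n ≠ v := by
          intro h; subst h; exact hv (by simp [internals, hn])
        have hnl : n ∉ l.internals := fun h => hdisj n h n hn rfl
        simp [hnv, hnl]
      simp only [countSat, internals, List.length_cons, List.length_append]
      rw [countSat_congr x _ bl l hlcong, countSat_congr x _ br r hrcong,
        rootVar_congr x _ bl l hlcong, rootVar_congr x _ br r hrcong,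
        hbl_rv, hbr_rv, hbl_cnt, hbr_cnt]
      simp only [if_pos trivial, triCount_or]
      ring

end ClauseTree
namespace ClauseTree

/-- For a node with nodup internals, and any chosen value `c` for the root variable,
there is an assignment that is canonical on both subtrees. -/
lemma exists_b (x : ℕ → Bool) (v₀ : ℕ) (l r : ClauseTree)
    (hnd : (node v₀ l r).internals.Nodup) (c : Bool) :
    ∃ b : ℕ → Bool, b v₀ = c ∧ countSat x b (node v₀ l r) =
      2 * l.internals.length + 2 * r.internals.length +
        triCount (orLeaves x l) (orLeaves x r) c := by
  simp only [internals, List.nodup_cons, List.nodup_append] at hnd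
  obtain ⟨hv, hl, hr, hdisj⟩ := hnd
  obtain ⟨bl, hbl_out, hbl_rv, hbl_cnt⟩ := exists_canonical x l hl
  obtain ⟨br, hbr_out, hbr_rv, hbr_cnt⟩ := exists_canonical x r hr
  refine ⟨fun n => if n = v₀ then c else if n ∈ l.internals then bl n else br n,
    by simp, ?_⟩
  have hlcong : ∀ n ∈ l.internals,
      (fun n => if n = v₀ then c else if n ∈ l.internals then bl n else br n) n = bl n := by
    intro n hn
    have hnv : n ≠ v₀ := by intro h; subst h; exact hv (by simp [hn])
    simp [hnv, hn]
  have hrcong : ∀ n ∈ r.internals,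
      (fun n => if n = v₀ then c else if n ∈ l.internals then bl n else br n) n = br n := by
    intro n hn
    have hnv : n ≠ v₀ := by intro h; subst h; exact hv (by simp [hn])
    have hnl : n ∉ l.internals := fun h => hdisj n h n hn rfl
    simp [hnv, hnl]
  simp only [countSat]
  rw [countSat_congr x _ bl l hlcong, countSat_congr x _ br r hrcong,
    rootVar_congr x _ bl l hlcong, rootVar_congr x _ br r hrcong,
    hbl_rv, hbr_rv, hbl_cnt, hbr_cnt]
  simp

end ClauseTree

theorem clause_tree_is_strict_gadget (k : ℕ) (hk : 2 ≤ k)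
    (v₀ : ℕ) (l r : ClauseTree)
    (ht : ClauseTree.IsClauseTree k (ClauseTree.node v₀ l r)) :
    ((ClauseTree.numConstraints (ClauseTree.node v₀ l r) : ℚ) / 2 = 3 * ((k : ℚ) - 1) / 2) ∧
    (∀ x : ℕ → Bool, (∃ i ∈ Finset.Icc 1 k, x i = true) →
      (∀ b : ℕ → Bool, b v₀ = true →
        ClauseTree.val x b (ClauseTree.node v₀ l r) ≤ (k : ℚ) - 1) ∧
      (∃ b : ℕ → Bool, b v₀ = true ∧
        ClauseTree.val x b (ClauseTree.node v₀ l r) = (k : ℚ) - 1)) ∧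
    (∀ x : ℕ → Bool, (∀ i ∈ Finset.Icc 1 k, x i = false) →
      (∀ b : ℕ → Bool, b v₀ = true →
        ClauseTree.val x b (ClauseTree.node v₀ l r) ≤ (k : ℚ) - 2) ∧
      (∃ b : ℕ → Bool, b v₀ = true ∧
        ClauseTree.val x b (ClauseTree.node v₀ l r) = (k : ℚ) - 2)) := by
  obtain ⟨hnd, hmem, hind⟩ := ht
  set t := ClauseTree.node v₀ l r with htdef
  -- leaves have length k
  have hfin : t.leaves.toFinset = Finset.Icc 1 k := by
    ext i; simp only [List.mem_toFinset]; exact hmem i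
  have hlen : t.leaves.length = k := by
    rw [← List.toFinset_card_of_nodup hnd, hfin, Nat.card_Icc]; omega
  have hmlen : t.internals.length + 1 = k := by
    rw [← ClauseTree.leaves_length]; exact hlen
  have hsplit : t.internals.length = l.internals.length + r.internals.length + 1 := by
    simp [htdef, ClauseTree.internals]
  have hlr : l.internals.length + r.internals.length + 2 = k := by omega
  have hkQ : (2 : ℚ) ≤ (k : ℚ) := by exact_mod_cast hk
  -- leaves of l and r are in Icc 1 k
  have hsubl : ∀ i ∈ l.leaves, i ∈ Finset.Icc 1 k := fun i hi =>
    (hmem i).mp (by simp [htdef, ClauseTree.leaves, hi])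
  have hsubr : ∀ i ∈ r.leaves, i ∈ Finset.Icc 1 k := fun i hi =>
    (hmem i).mp (by simp [htdef, ClauseTree.leaves, hi])
  refine ⟨?_, ?_, ?_⟩
  · -- total weight
    rw [ClauseTree.numConstraints_eq]
    have : (t.internals.length : ℚ) = (k : ℚ) - 1 := by
      have := hmlen; push_cast [← this]; ring
    push_cast [this]; ring
  · -- satisfied case
    intro x ⟨i, hik, hxi⟩
    have hileaf : i ∈ t.leaves := (hmem i).mpr hik
    have hor : ClauseTree.orLeaves x t = true := ClauseTree.orLeaves_true x t i hileaf hxi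
    constructor
    · intro b hb
      have h2 : ClauseTree.countSat x b t + 2 ≤ 2 * k := by
        have := ClauseTree.countSat_le x b t; omega
      have h3 : (ClauseTree.countSat x b t : ℚ) + 2 ≤ 2 * k := by exact_mod_cast h2
      show (ClauseTree.countSat x b t : ℚ) / 2 ≤ (k : ℚ) - 1
      linarith
    · obtain ⟨b, hbv, hcnt⟩ := ClauseTree.exists_b x v₀ l r hind true
      have htri : ClauseTree.triCount (ClauseTree.orLeaves x l) (ClauseTree.orLeaves x r)
          true = 2 := by
        have : (ClauseTree.orLeaves x l || ClauseTree.orLeaves x r) = true := hor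
        cases hpl : ClauseTree.orLeaves x l <;> cases hpr : ClauseTree.orLeaves x r <;>
          simp [hpl, hpr] at this ⊢ <;> decide
      refine ⟨b, hbv, ?_⟩
      have h2 : ClauseTree.countSat x b t + 2 = 2 * k := by
        rw [htdef, hcnt, htri]; omega
      have h3 : (ClauseTree.countSat x b t : ℚ) + 2 = 2 * k := by exact_mod_cast h2
      show (ClauseTree.countSat x b t : ℚ) / 2 = (k : ℚ) - 1
      linarith
  · -- falsified case
    intro x hx
    have horl : ClauseTree.orLeaves x l = false :=
      ClauseTree.orLeaves_false x l fun i hi => hx i (hsubl i hi)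
    have horr : ClauseTree.orLeaves x r = false :=
      ClauseTree.orLeaves_false x r fun i hi => hx i (hsubr i hi)
    constructor
    · intro b hb
      have hcl := ClauseTree.countSat_le x b l
      have hcr := ClauseTree.countSat_le x b r
      have htri := ClauseTree.triCount_le_two (ClauseTree.rootVar x b l)
        (ClauseTree.rootVar x b r) (b v₀)
      have h2 : ClauseTree.countSat x b t + 4 ≤ 2 * k := by
        have hexp : ClauseTree.countSat x b t = ClauseTree.countSat x b l +
            ClauseTree.countSat x b r + ClauseTree.triCount (ClauseTree.rootVar x b l)
            (ClauseTree.rootVar x b r) (b v₀) := rfl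
        cases hpl : ClauseTree.rootVar x b l with
        | true =>
          have := ClauseTree.countSat_lie x b l hpl horl
          omega
        | false =>
          cases hpr : ClauseTree.rootVar x b r with
          | true =>
            have := ClauseTree.countSat_lie x b r hpr horr
            omega
          | false =>
            rw [hexp, hpl, hpr, hb, ClauseTree.triCount_ff]
            omega
      have h3 : (ClauseTree.countSat x b t : ℚ) + 4 ≤ 2 * k := by exact_mod_cast h2
      show (ClauseTree.countSat x b t : ℚ) / 2 ≤ (k : ℚ) - 2
      linarith
    · obtain ⟨b, hbv, hcnt⟩ := ClauseTree.exists_b x v₀ l r hind true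
      refine ⟨b, hbv, ?_⟩
      have h2 : ClauseTree.countSat x b t + 4 = 2 * k := by
        rw [htdef, hcnt, horl, horr, ClauseTree.triCount_ff]; omega
      have h3 : (ClauseTree.countSat x b t : ℚ) + 4 = 2 * k := by exact_mod_cast h2
      show (ClauseTree.countSat x b t : ℚ) / 2 = (k : ℚ) - 2
      linarith
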